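/- Let (L, R) be a modality in a category E with finite limits. A map u : A → B is a fiberwise R-equivalence (every base change u' of u induces an equivalence of categories (u')* : R[B'] → R[A']) if and only if both u and its diagonal Δ(u) belong to L. -/

import Mathlib

set_option linter.unusedSectionVars false


/-!
STATEMENT 15: u is a fiberwise R-equivalence iff u and its diagonal belong to L.
-/

open CategoryTheory CategoryTheory.Limits

universe w v u

namespace Paper

variable {E : Type u} [Category.{v} E]

/-- `u` is left orthogonal to `f`: every commutative square from `u` to `f` admits a
unique diagonal filler. -/
def Orth {A B X Y : E} (u : A ⟶ B) (f : X ⟶ Y) : Prop :=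
  ∀ (x : A ⟶ X) (y : B ⟶ Y), x ≫ f = u ≫ y → ∃! d : B ⟶ X, u ≫ d = x ∧ d ≫ f = y

/-- A factorization system `(L, R)`: two replete classes of maps with `L` orthogonal to
`R`, such that every map factors as a map in `L` followed by a map in `R`. -/
structure FactorizationSystem (E : Type u) [Category.{v} E] where
  /-- the left class -/
  L : MorphismProperty E
  /-- the right class -/
  R : MorphismProperty E
  replete_L : ∀ ⦃X Y X' Y' : E⦄ (f : X ⟶ Y) (f' : X' ⟶ Y'),
    (Arrow.mk f ≅ Arrow.mk f') → L f → L f'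
  replete_R : ∀ ⦃X Y X' Y' : E⦄ (f : X ⟶ Y) (f' : X' ⟶ Y'),
    (Arrow.mk f ≅ Arrow.mk f') → R f → R f'
  orth : ∀ ⦃A B X Y : E⦄ (u : A ⟶ B) (f : X ⟶ Y), L u → R f → Orth u f
  fac : ∀ ⦃X Y : E⦄ (f : X ⟶ Y), ∃ (Z : E) (l : X ⟶ Z) (r : Z ⟶ Y),
    L l ∧ R r ∧ l ≫ r = f

/-- `P` is stable under base change: any pullback of a map in `P` is in `P`. -/
def StableUnderBaseChange' (P : MorphismProperty E) : Prop :=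
  ∀ ⦃W X Y Z : E⦄ (fst : W ⟶ X) (snd : W ⟶ Y) (f : X ⟶ Z) (g : Y ⟶ Z),
    IsPullback fst snd f g → P f → P snd

end Paper

namespace Paper

universe v₂ u₂
variable {E : Type u} [Category.{v} E]

variable [HasFiniteLimits E]

/-- `u : A ⟶ B` is an `R`-equivalence: the base change functor `u* : R[B] ⥤ R[A]` is an
equivalence of categories.  Since `R[B]` is a full subcategory of `E/B`, this is
expressed as: `u*` is fully faithful (pointwise bijectivity on hom-sets between objects
with structure map in `R`) and essentially surjective onto `R[A]`. -/
def IsREquiv (S : FactorizationSystem E) {A B : E} (u : A ⟶ B) : Prop :=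
  (∀ (Y Y' : Over B), S.R Y.hom → S.R Y'.hom →
    Function.Bijective (fun φ : Y ⟶ Y' => (Over.pullback u).map φ)) ∧
  (∀ X : Over A, S.R X.hom →
    ∃ Y : Over B, S.R Y.hom ∧ Nonempty ((Over.pullback u).obj Y ≅ X))


section Auxiliary

lemma orth_of_isIso {A B X Y : E} (u : A ⟶ B) (f : X ⟶ Y) [IsIso f] : Orth u f := by
  intro x y h
  refine ⟨y ≫ inv f, ⟨by rw [← Category.assoc, ← h, Category.assoc, IsIso.hom_inv_id,
    Category.comp_id], by simp⟩, ?_⟩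
  rintro d ⟨hd1, hd2⟩
  rw [← hd2, Category.assoc, IsIso.hom_inv_id, Category.comp_id]

lemma mem_R_of_orth (S : FactorizationSystem E) {X Y : E} (f : X ⟶ Y)
    (h : ∀ ⦃P Q : E⦄ (l : P ⟶ Q), S.L l → Orth l f) : S.R f := by
  obtain ⟨Z, l, r, hl, hr, hlr⟩ := S.fac f
  obtain ⟨d, ⟨hd1, hd2⟩, -⟩ := h l hl (𝟙 X) r (by rw [Category.id_comp, hlr])
  have hdl : d ≫ l = 𝟙 Z := by
    obtain ⟨e, -, he⟩ := S.orth l r hl hr l r rfl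
    rw [he (d ≫ l) ⟨by rw [← Category.assoc, hd1, Category.id_comp],
      by rw [Category.assoc, hlr, hd2]⟩, he (𝟙 Z) ⟨Category.comp_id l, Category.id_comp r⟩]
  have : IsIso l := ⟨d, hd1, hdl⟩
  refine S.replete_R r f (Arrow.isoMk (asIso l).symm (Iso.refl Y) ?_) hr
  dsimp
  rw [Category.comp_id, IsIso.inv_comp_eq, hlr]

lemma mem_L_of_orth (S : FactorizationSystem E) {A B : E} (u : A ⟶ B)
    (h : ∀ ⦃X Y : E⦄ (r : X ⟶ Y), S.R r → Orth u r) : S.L u := by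
  obtain ⟨Z, l, r, hl, hr, hlr⟩ := S.fac u
  obtain ⟨d, ⟨hd1, hd2⟩, -⟩ := h r hr l (𝟙 B) (by rw [Category.comp_id, hlr])
  have hrd : r ≫ d = 𝟙 Z := by
    obtain ⟨e, -, he⟩ := S.orth l r hl hr l r rfl
    rw [he (r ≫ d) ⟨by rw [← Category.assoc, hlr, hd1],
      by rw [Category.assoc, hd2, Category.comp_id]⟩,
      he (𝟙 Z) ⟨Category.comp_id l, Category.id_comp r⟩]
  have : IsIso r := ⟨d, hrd, hd2⟩
  refine S.replete_L l u (Arrow.isoMk (Iso.refl A) (asIso r) ?_) hl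
  dsimp
  rw [Category.id_comp, hlr]

lemma orth_comp {A B C X Y : E} {u : A ⟶ B} {v : B ⟶ C} {f : X ⟶ Y}
    (hu : Orth u f) (hv : Orth v f) : Orth (u ≫ v) f := by
  intro x y h
  obtain ⟨d₁, ⟨hd₁, hd₁'⟩, hu1⟩ := hu x (v ≫ y) (by rw [h, Category.assoc])
  obtain ⟨d₂, ⟨hd₂, hd₂'⟩, hu2⟩ := hv d₁ y hd₁'
  refine ⟨d₂, ⟨by rw [Category.assoc, hd₂, hd₁], hd₂'⟩, ?_⟩
  rintro d ⟨h1, h2⟩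
  have : v ≫ d = d₁ := hu1 (v ≫ d) ⟨by rw [← Category.assoc, h1], by rw [Category.assoc, h2]⟩
  exact hu2 d ⟨this, h2⟩

lemma L_comp (S : FactorizationSystem E) {A B C : E} {u : A ⟶ B} {v : B ⟶ C}
    (hu : S.L u) (hv : S.L v) : S.L (u ≫ v) :=
  mem_L_of_orth S _ fun _ _ r hr => orth_comp (S.orth _ _ hu hr) (S.orth _ _ hv hr)

lemma orth_of_isPullback {P Q W X Y Z : E} (l : P ⟶ Q) {fst : W ⟶ X} {snd : W ⟶ Y}
    {f : X ⟶ Z} {g : Y ⟶ Z} (pb : IsPullback fst snd f g) (h : Orth l f) : Orth l snd := by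
  intro x y hxy
  obtain ⟨e, ⟨he1, he2⟩, hu⟩ := h (x ≫ fst) (y ≫ g)
    (by rw [Category.assoc, pb.w, ← Category.assoc, hxy, Category.assoc])
  refine ⟨pb.lift e y he2, ⟨?_, pb.lift_snd e y he2⟩, ?_⟩
  · apply pb.hom_ext
    · rw [Category.assoc, pb.lift_fst, he1]
    · rw [Category.assoc, pb.lift_snd, hxy]
  · rintro d ⟨hd1, hd2⟩
    apply pb.hom_ext
    · rw [pb.lift_fst]
      exact hu (d ≫ fst) ⟨by rw [← Category.assoc, hd1],
        by rw [Category.assoc, pb.w, ← Category.assoc, hd2]⟩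
    · rw [pb.lift_snd, hd2]

lemma R_stable (S : FactorizationSystem E) : StableUnderBaseChange' S.R :=
  fun _ _ _ _ fst snd f g pb hf =>
    mem_R_of_orth S snd fun _ _ l hl => orth_of_isPullback l pb (S.orth l f hl hf)

lemma orth_cancel {A B X Y Z : E} {l : A ⟶ B} {f : X ⟶ Y} {g : Y ⟶ Z}
    (hg : Orth l g) (hfg : Orth l (f ≫ g)) : Orth l f := by
  intro x y hxy
  obtain ⟨d, ⟨hd1, hd2⟩, hu⟩ := hfg x (y ≫ g)
    (by rw [← Category.assoc, hxy, Category.assoc])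
  obtain ⟨e, -, heu⟩ := hg (x ≫ f) (y ≫ g) (by rw [← Category.assoc, hxy])
  have hdy : d ≫ f = y := by
    rw [heu (d ≫ f) ⟨by rw [← Category.assoc, hd1], by rw [Category.assoc, hd2]⟩,
      heu y ⟨hxy.symm, rfl⟩]
  refine ⟨d, ⟨hd1, hdy⟩, ?_⟩
  rintro d' ⟨h1, h2⟩
  exact hu d' ⟨h1, by rw [← Category.assoc, h2]⟩

lemma R_cancel (S : FactorizationSystem E) {X Y Z : E} {f : X ⟶ Y} {g : Y ⟶ Z}
    (hg : S.R g) (hfg : S.R (f ≫ g)) : S.R f :=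
  mem_R_of_orth S f fun _ _ l hl => orth_cancel (S.orth l g hl hg) (S.orth l (f ≫ g) hl hfg)

lemma isIso_of_L_R (S : FactorizationSystem E) {X Y : E} {f : X ⟶ Y}
    (hL : S.L f) (hR : S.R f) : IsIso f := by
  obtain ⟨d, ⟨hd1, hd2⟩, -⟩ := S.orth f f hL hR (𝟙 X) (𝟙 Y) (by simp)
  exact ⟨d, hd1, hd2⟩

end Auxiliary

section Main

lemma L_of_postcomp (S : FactorizationSystem E) (hmod : StableUnderBaseChange' S.L)
    {X W Z : E} (c : X ⟶ W) (g : W ⟶ Z) (hg : S.L g)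
    (hΔ : S.L (pullback.diagonal g)) (hcg : S.L (c ≫ g)) : S.L c := by
  have h1 := pullback_lift_diagonal_isPullback c g
  have hw : 𝟙 X ≫ (c ≫ g) = c ≫ g := by simp
  have h2 : S.L (pullback.lift (𝟙 X) c hw) := hmod _ _ _ _ h1 hΔ
  have h3 : S.L (pullback.snd (c ≫ g) g) :=
    hmod _ _ _ _ (IsPullback.of_hasPullback (c ≫ g) g) hcg
  have h4 : pullback.lift (𝟙 X) c hw ≫ pullback.snd (c ≫ g) g = c :=
    pullback.lift_snd _ _ _
  rw [← h4]
  exact L_comp S h2 h3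

lemma isREquiv_of_L (S : FactorizationSystem E) (hmod : StableUnderBaseChange' S.L)
    {A B : E} {u : A ⟶ B} (hu : S.L u) (hΔ : S.L (pullback.diagonal u)) :
    IsREquiv S u := by
  constructor
  · -- fully faithful
    intro Y Y' hY hY'
    have hfst : S.L (pullback.fst Y.hom u) :=
      hmod _ _ _ _ (IsPullback.of_hasPullback Y.hom u).flip hu
    have horth := S.orth _ _ hfst hY'
    have key : ∀ φ : Y ⟶ Y',
        ((Over.pullback u).map φ).left ≫ pullback.fst Y'.hom u =
          pullback.fst Y.hom u ≫ φ.left := by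
      intro φ
      simp [Over.pullback]
      exact pullback.lift_fst _ _ _
    constructor
    · intro φ₁ φ₂ hφ
      apply Over.OverMorphism.ext
      have hleft : pullback.fst Y.hom u ≫ φ₁.left = pullback.fst Y.hom u ≫ φ₂.left := by
        rw [← key φ₁, ← key φ₂]
        exact congrArg (· ≫ pullback.fst Y'.hom u) (congrArg CommaMorphism.left hφ)
      obtain ⟨d, -, hd⟩ := horth (pullback.fst Y.hom u ≫ φ₁.left) Y.hom
        (by rw [Category.assoc, Over.w φ₁])
      rw [hd φ₁.left ⟨rfl, Over.w φ₁⟩, hd φ₂.left ⟨hleft.symm, Over.w φ₂⟩]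
    · intro ψ
      have hψw : ψ.left ≫ pullback.snd Y'.hom u = pullback.snd Y.hom u := Over.w ψ
      obtain ⟨d, ⟨hd1, hd2⟩, -⟩ := horth (ψ.left ≫ pullback.fst Y'.hom u) Y.hom
        (by rw [Category.assoc, pullback.condition, ← Category.assoc, hψw,
          pullback.condition])
      refine ⟨Over.homMk d hd2, ?_⟩
      apply Over.OverMorphism.ext
      apply pullback.hom_ext
      · rw [key (Over.homMk d hd2)]
        exact hd1.symm ▸ rfl
      · have h5 : ((Over.pullback u).map (Over.homMk d hd2)).left ≫
            pullback.snd Y'.hom u = pullback.snd Y.hom u :=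
          Over.w ((Over.pullback u).map (Over.homMk d hd2))
        rw [h5, hψw]
  · -- essentially surjective
    intro X hX
    obtain ⟨Z, l, r, hl, hr, hlr⟩ := S.fac (X.hom ≫ u)
    refine ⟨Over.mk r, hr, ?_⟩
    have hc : l ≫ r = X.hom ≫ u := hlr
    set c : X.left ⟶ pullback r u := pullback.lift l X.hom hc with hcdef
    have hcsnd : c ≫ pullback.snd r u = X.hom := pullback.lift_snd _ _ _
    have hcfst : c ≫ pullback.fst r u = l := pullback.lift_fst _ _ _
    have hsnd : S.R (pullback.snd r u) :=
      R_stable S _ _ _ _ (IsPullback.of_hasPullback r u) hr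
    have hcR : S.R c := R_cancel S hsnd (by rw [hcsnd]; exact hX)
    have hfstL : S.L (pullback.fst r u) :=
      hmod _ _ _ _ (IsPullback.of_hasPullback r u).flip hu
    letI : S.L.IsStableUnderBaseChange := ⟨fun sq hg => hmod _ _ _ _ sq hg⟩
    have hΔfst : S.L (pullback.diagonal (pullback.fst r u)) := by
      have := MorphismProperty.of_isPullback (P := S.L.diagonal)
        (IsPullback.of_hasPullback r u).flip (MorphismProperty.diagonal_iff.mpr hΔ)
      exact MorphismProperty.diagonal_iff.mp this
    have hcL : S.L c := L_of_postcomp S hmod c (pullback.fst r u) hfstL hΔfst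
      (by rw [hcfst]; exact hl)
    have : IsIso c := isIso_of_L_R S hcL hcR
    exact ⟨(Over.isoMk (asIso c) (by simpa using hcsnd)).symm⟩

end Main

section Forward

lemma R_id (S : FactorizationSystem E) (B : E) : S.R (𝟙 B) :=
  mem_R_of_orth S (𝟙 B) fun _ _ l _ => orth_of_isIso l (𝟙 B)

lemma orth_of_ff (S : FactorizationSystem E) {A B : E} (u : A ⟶ B)
    (hff : ∀ (Y Y' : Over B), S.R Y.hom → S.R Y'.hom →
      Function.Bijective (fun φ : Y ⟶ Y' => (Over.pullback u).map φ))
    {X Y₀ : E} (f : X ⟶ Y₀) (hf : S.R f) : Orth u f := by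
  intro x y hxy
  have hp : S.R (pullback.fst y f) :=
    R_stable S _ _ _ _ (IsPullback.of_hasPullback y f).flip hf
  set a : A ⟶ pullback y f := pullback.lift u x hxy.symm with hadef
  have hafst : a ≫ pullback.fst y f = u := pullback.lift_fst _ _ _
  have hasnd : a ≫ pullback.snd y f = x := pullback.lift_snd _ _ _
  have hbij := hff (Over.mk (𝟙 B)) (Over.mk (pullback.fst y f))
    (by simpa using R_id S B) (by simpa using hp)
  -- the candidate map between the pullbacks
  have hw : (pullback.snd (𝟙 B) u ≫ a) ≫ pullback.fst y f = pullback.snd (𝟙 B) u ≫ u := by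
    rw [Category.assoc, hafst]
  set ψl : pullback (𝟙 B) u ⟶ pullback (pullback.fst y f) u :=
    pullback.lift (pullback.snd (𝟙 B) u ≫ a) (pullback.snd (𝟙 B) u) hw with hψdef
  have hψsnd : ψl ≫ pullback.snd (pullback.fst y f) u = pullback.snd (𝟙 B) u :=
    pullback.lift_snd _ _ _
  have hψfst : ψl ≫ pullback.fst (pullback.fst y f) u = pullback.snd (𝟙 B) u ≫ a :=
    pullback.lift_fst _ _ _
  set ψ : (Over.pullback u).obj (Over.mk (𝟙 B)) ⟶ (Over.pullback u).obj
    (Over.mk (pullback.fst y f)) := Over.homMk ψl hψsnd with hψ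
  have key : ∀ φ : Over.mk (𝟙 B) ⟶ Over.mk (pullback.fst y f),
      ((Over.pullback u).map φ).left ≫ pullback.fst (pullback.fst y f) u =
        pullback.fst (𝟙 B) u ≫ φ.left := by
    intro φ; simp [Over.pullback]
    exact pullback.lift_fst _ _ _
  have hfst0 : pullback.fst (𝟙 B) u = pullback.snd (𝟙 B) u ≫ u := by
    have := pullback.condition (f := 𝟙 B) (g := u)
    rwa [Category.comp_id] at this
  -- the section of pullback (𝟙 B) u
  have hjw : u ≫ 𝟙 B = 𝟙 A ≫ u := by simp
  set j : A ⟶ pullback (𝟙 B) u := pullback.lift u (𝟙 A) hjw with hjdef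
  have hjsnd : j ≫ pullback.snd (𝟙 B) u = 𝟙 A := pullback.lift_snd _ _ _
  -- extract a filler from a map φ with u*φ = ψ
  obtain ⟨φ, hφ⟩ := hbij.2 ψ
  have hφfst : φ.left ≫ pullback.fst y f = 𝟙 B := Over.w φ
  have hkey : pullback.fst (𝟙 B) u ≫ φ.left = pullback.snd (𝟙 B) u ≫ a := by
    rw [← key φ, show ((Over.pullback u).map φ).left = ψ.left from congrArg (fun g => g.left) hφ]
    exact hψfst
  have hus : u ≫ φ.left = a := by
    have := congrArg (j ≫ ·) hkey
    simpa [hfst0, hjsnd, ← Category.assoc] using this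
  -- uniqueness part: every filler arises from a map φ' with u*φ' = ψ
  have huniq : ∀ d : B ⟶ X, u ≫ d = x → d ≫ f = y → d = φ.left ≫ pullback.snd y f := by
    intro d hd1 hd2
    have hsw : 𝟙 B ≫ y = d ≫ f := by rw [Category.id_comp, hd2]
    set sd : B ⟶ pullback y f := pullback.lift (𝟙 B) d hsw with hsddef
    have hsdfst : sd ≫ pullback.fst y f = 𝟙 B := pullback.lift_fst _ _ _
    have hsdsnd : sd ≫ pullback.snd y f = d := pullback.lift_snd _ _ _
    set φd : Over.mk (𝟙 B) ⟶ Over.mk (pullback.fst y f) := Over.homMk sd hsdfst with hφddef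
    have husd : u ≫ sd = a := by
      apply pullback.hom_ext
      · rw [Category.assoc, hsdfst, Category.comp_id, hafst]
      · rw [Category.assoc, hsdsnd, hd1, hasnd]
    have hmapd : (Over.pullback u).map φd = ψ := by
      apply Over.OverMorphism.ext
      apply pullback.hom_ext
      · simp only [hψ, hψdef, hφddef, Over.pullback_map_left, Over.mk_hom,
          Over.homMk_left, pullback.lift_fst]
        rw [hfst0, Category.assoc, husd]
      · simp only [hψ, hψdef, hφddef, Over.pullback_map_left, Over.mk_hom,
          Over.homMk_left, pullback.lift_snd]
    have : φd = φ := hbij.1 (by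
      show (Over.pullback u).map φd = (Over.pullback u).map φ
      rw [hmapd]; exact hφ.symm)
    rw [← this]
    show d = sd ≫ pullback.snd y f
    rw [hsdsnd]
  refine ⟨φ.left ≫ pullback.snd y f, ⟨?_, ?_⟩, fun d hd => huniq d hd.1 hd.2⟩
  · rw [← Category.assoc, hus, hasnd]
  · rw [Category.assoc, ← pullback.condition, ← Category.assoc, hφfst, Category.id_comp]

end Forward

section Section

lemma orth_section (S : FactorizationSystem E) {K A : E} (v : K ⟶ A) (j : A ⟶ K)
    (hjv : j ≫ v = 𝟙 A)
    (hv : ∀ ⦃X Y : E⦄ (r : X ⟶ Y), S.R r → Orth v r)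
    (hes : ∀ P : Over K, S.R P.hom → ∃ Q : Over A, S.R Q.hom ∧
      Nonempty ((Over.pullback v).obj Q ≅ P))
    {X Y₀ : E} (f : X ⟶ Y₀) (hf : S.R f) : Orth j f := by
  intro x y hxy
  have hp : S.R (pullback.fst y f) :=
    R_stable S _ _ _ _ (IsPullback.of_hasPullback y f).flip hf
  obtain ⟨Q, hQ, ⟨ι⟩⟩ := hes (Over.mk (pullback.fst y f)) (by simpa using hp)
  set a : A ⟶ pullback y f := pullback.lift j x hxy.symm with hadef
  have hafst : a ≫ pullback.fst y f = j := pullback.lift_fst _ _ _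
  have hasnd : a ≫ pullback.snd y f = x := pullback.lift_snd _ _ _
  obtain ⟨w, w', hιh, hιi, hιhi, hιih⟩ :
      ∃ (w : pullback Q.hom v ⟶ pullback y f) (w' : pullback y f ⟶ pullback Q.hom v),
        w ≫ pullback.fst y f = pullback.snd Q.hom v ∧
        w' ≫ pullback.snd Q.hom v = pullback.fst y f ∧
        w ≫ w' = 𝟙 (pullback Q.hom v) ∧ w' ≫ w = 𝟙 (pullback y f) :=
    ⟨ι.hom.left, ι.inv.left, by simpa using Over.w ι.hom, by simpa using Over.w ι.inv,
      by rw [← Over.comp_left, ι.hom_inv_id]; rfl,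
      by rw [← Over.comp_left, ι.inv_hom_id]; rfl⟩
  have hcond : pullback.fst Q.hom v ≫ Q.hom = pullback.snd Q.hom v ≫ v :=
    pullback.condition
  have hcond' : pullback.fst y f ≫ y = pullback.snd y f ≫ f := pullback.condition
  set b : A ⟶ Q.left := a ≫ w' ≫ pullback.fst Q.hom v with hbdef
  have hb : b ≫ Q.hom = 𝟙 A := by
    rw [hbdef]
    simp only [Category.assoc]
    rw [hcond, reassoc_of% hιi, reassoc_of% hafst, hjv]
  -- core uniqueness: any t with the two properties equals v ≫ b
  have hcore : ∀ t : K ⟶ Q.left, t ≫ Q.hom = v → j ≫ t = b → t = v ≫ b := by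
    intro t ht hjt
    obtain ⟨e, ⟨he1, he2⟩, -⟩ := hv Q.hom hQ t (𝟙 A) (by rw [ht, Category.comp_id])
    have heb : e = b := by rw [← hjt, ← he1, ← Category.assoc, hjv, Category.id_comp]
    rw [← he1, heb]
  have ht0 : (v ≫ b) ≫ Q.hom = 𝟙 K ≫ v := by
    rw [Category.assoc, hb, Category.comp_id, Category.id_comp]
  have hsfst : (pullback.lift (v ≫ b) (𝟙 K) ht0 ≫ w) ≫ pullback.fst y f = 𝟙 K := by
    rw [Category.assoc, hιh, pullback.lift_snd]
  have hjs : j ≫ pullback.lift (v ≫ b) (𝟙 K) ht0 ≫ w = a := by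
    have h1 : j ≫ pullback.lift (v ≫ b) (𝟙 K) ht0 = a ≫ w' := by
      apply pullback.hom_ext
      · simp only [Category.assoc, pullback.lift_fst]
        rw [← Category.assoc j v, hjv, Category.id_comp, hbdef]
      · simp only [Category.assoc, pullback.lift_snd, Category.comp_id]
        rw [hιi, hafst]
    rw [← Category.assoc, h1, Category.assoc, hιih, Category.comp_id]
  refine ⟨(pullback.lift (v ≫ b) (𝟙 K) ht0 ≫ w) ≫ pullback.snd y f, ⟨?_, ?_⟩, ?_⟩
  · rw [← Category.assoc, hjs, hasnd]
  · calc ((pullback.lift (v ≫ b) (𝟙 K) ht0 ≫ w) ≫ pullback.snd y f) ≫ f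
        = (pullback.lift (v ≫ b) (𝟙 K) ht0 ≫ w) ≫ pullback.fst y f ≫ y := by
          rw [Category.assoc, ← hcond']
      _ = 𝟙 K ≫ y := by rw [← Category.assoc, hsfst]
      _ = y := Category.id_comp y
  · rintro d ⟨hd1, hd2⟩
    have hsw : 𝟙 K ≫ y = d ≫ f := by rw [Category.id_comp, hd2]
    set sd : K ⟶ pullback y f := pullback.lift (𝟙 K) d hsw with hsddef
    have hsdfst : sd ≫ pullback.fst y f = 𝟙 K := pullback.lift_fst _ _ _
    have hsdsnd : sd ≫ pullback.snd y f = d := pullback.lift_snd _ _ _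
    have htdQ : (sd ≫ w' ≫ pullback.fst Q.hom v) ≫ Q.hom = v := by
      simp only [Category.assoc]
      rw [hcond, reassoc_of% hιi, reassoc_of% hsdfst]
    have hjsd : j ≫ sd = a := by
      apply pullback.hom_ext
      · rw [Category.assoc, hsdfst, Category.comp_id, hafst]
      · rw [Category.assoc, hsdsnd, hd1, hasnd]
    have hjtd : j ≫ sd ≫ w' ≫ pullback.fst Q.hom v = b := by
      rw [← Category.assoc, hjsd, hbdef]
    have htdeq : sd ≫ w' ≫ pullback.fst Q.hom v = v ≫ b :=
      hcore _ htdQ hjtd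
    have hsd : sd ≫ w' = pullback.lift (v ≫ b) (𝟙 K) ht0 := by
      apply pullback.hom_ext
      · rw [pullback.lift_fst, Category.assoc]
        exact htdeq
      · rw [pullback.lift_snd, Category.assoc, hιi, hsdfst]
    rw [← hsd]
    simp only [Category.assoc]
    rw [reassoc_of% hιih, hsdsnd]

end Section

/-- for a modality `(L, R)` in a category with finite limits, a map
`u : A ⟶ B` is a fiberwise `R`-equivalence (every base change of `u` is an
`R`-equivalence) if and only if both `u` and its diagonal `Δ(u)` belong to `L`. -/
theorem fiberwise_REquiv_iff (S : FactorizationSystem E)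
    (hmod : StableUnderBaseChange' S.L) {A B : E} (u : A ⟶ B) :
    (∀ ⦃A' B' : E⦄ (p : A' ⟶ A) (u' : A' ⟶ B') (q : B' ⟶ B),
      IsPullback p u' u q → IsREquiv S u') ↔
    (S.L u ∧ S.L (pullback.diagonal u)) := by
  constructor
  · intro H
    have h0 : IsREquiv S u := H (𝟙 A) u (𝟙 B) IsPullback.of_id_fst
    have hK : IsPullback (pullback.fst u u) (pullback.snd u u) u u :=
      IsPullback.of_hasPullback u u
    have hReqSnd : IsREquiv S (pullback.snd u u) :=
      H (pullback.fst u u) (pullback.snd u u) u hK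
    have hLu : S.L u := mem_L_of_orth S u fun _ _ f hf => orth_of_ff S u h0.1 f hf
    have hLsnd : S.L (pullback.snd u u) :=
      mem_L_of_orth S _ fun _ _ f hf => orth_of_ff S _ hReqSnd.1 f hf
    refine ⟨hLu, ?_⟩
    exact mem_L_of_orth S _ fun _ _ f hf =>
      orth_section S (pullback.snd u u) (pullback.diagonal u) (pullback.diagonal_snd u)
        (fun _ _ r hr => S.orth _ _ hLsnd hr) hReqSnd.2 f hf
  · rintro ⟨hu, hD⟩ A' B' p u' q hpb
    have hLu' : S.L u' := hmod p u' u q hpb hu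
    letI : S.L.IsStableUnderBaseChange := ⟨fun sq hg => hmod _ _ _ _ sq hg⟩
    have hDu' : S.L (pullback.diagonal u') := by
      have := MorphismProperty.of_isPullback (P := S.L.diagonal) hpb
        (MorphismProperty.diagonal_iff.mpr hD)
      exact MorphismProperty.diagonal_iff.mp this
    exact isREquiv_of_L S hmod hLu' hDu'


end Paper
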